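/- Let n, m ≥ 1 and let h = (h_{ij}) ∈ M_{n×m}(L). Let g ∈ GL_{n+m}(L) be the block matrix [[τ_n, h], [0, τ_m]]. Then g ∈ GL_{n+m}(𝒪_L) · diag(t^2, 1, …, 1) · GL_{n+m}(𝒪_L) if and only if h_{n,1} is a unit of 𝒪_L (i.e. v(h_{n,1}) = 0) and h_{ij} ∈ 𝒪_L for all (i,j). -/

import Mathlib

open Matrix

/-- The canonical superbasic element `τ_r`: the `r×r` matrix with `t` in position `(r,1)`,
`1` on the superdiagonal, and `0` elsewhere (1-indexed); `τ_1 = (t)`. -/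
def tau {L : Type*} [Field L] (t : L) (r : ℕ) : Matrix (Fin r) (Fin r) L :=
  Matrix.of fun i j =>
    if (i : ℕ) + 1 = (j : ℕ) then 1 else if (i : ℕ) = r - 1 ∧ (j : ℕ) = 0 then t else 0

private lemma tau_apply {L : Type*} [Field L] (t : L) (r : ℕ) (i j : Fin r) :
    tau t r i j = if (i : ℕ) + 1 = (j : ℕ) then 1
      else if (i : ℕ) = r - 1 ∧ (j : ℕ) = 0 then t else 0 := rfl

private lemma det_tau {L : Type*} [Field L] (t : L) (r : ℕ) (hr : 1 ≤ r) :
    (tau t r).det = (-1) ^ (r - 1) * t := by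
  obtain ⟨s, rfl⟩ : ∃ s, r = s + 1 := ⟨r - 1, by omega⟩
  rw [Matrix.det_succ_column_zero, Finset.sum_eq_single (Fin.last s)]
  · have h1 : tau t (s + 1) (Fin.last s) 0 = t := by
      rw [tau_apply]
      have hc1 : ¬((Fin.last s : ℕ) + 1 = ((0 : Fin (s + 1)) : ℕ)) := by
        simp [Fin.last]
      rw [if_neg hc1, if_pos ⟨by simp [Fin.last], by simp⟩]
    have h2 : (tau t (s + 1)).submatrix (Fin.last s).succAbove Fin.succ
        = (1 : Matrix (Fin s) (Fin s) L) := by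
      ext a b
      rw [Matrix.submatrix_apply, Fin.succAbove_last, Matrix.one_apply, tau_apply]
      have ha := a.isLt
      by_cases hab : a = b
      · subst hab
        rw [if_pos (by simp), if_pos rfl]
      · have hc1 : ¬((a.castSucc : ℕ) + 1 = (b.succ : ℕ)) := by
          simp only [Fin.coe_castSucc, Fin.val_succ]
          exact fun hh => hab (Fin.ext (by omega))
        have hc2 : ¬((a.castSucc : ℕ) = s + 1 - 1 ∧ (b.succ : ℕ) = 0) := by
          simp only [Fin.coe_castSucc, Fin.val_succ]
          omega
        rw [if_neg hc1, if_neg hc2, if_neg hab]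
    rw [h1, h2, Matrix.det_one]
    simp [Fin.last]
  · intro b _ hb
    have hb' : (b : ℕ) ≠ s := fun hh => hb (Fin.ext (by simpa [Fin.last] using hh))
    have h0 : tau t (s + 1) b 0 = 0 := by
      rw [tau_apply]
      have hc1 : ¬((b : ℕ) + 1 = ((0 : Fin (s + 1)) : ℕ)) := by simp
      have hc2 : ¬((b : ℕ) = s + 1 - 1 ∧ ((0 : Fin (s + 1)) : ℕ) = 0) := by
        simp only [Fin.val_zero]; omega
      rw [if_neg hc1, if_neg hc2]
    rw [h0]; ring
  · intro hh; exact absurd (Finset.mem_univ _) hh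

/-! ### Valuation helper lemmas -/

section Val

variable {L : Type*} [Field L] (v : L → ℤ)

private lemma v_one (hv_mul : ∀ x y : L, x ≠ 0 → y ≠ 0 → v (x * y) = v x + v y) :
    v 1 = 0 := by
  have := hv_mul 1 1 one_ne_zero one_ne_zero
  rw [one_mul] at this; omega

private lemma v_neg (hv_mul : ∀ x y : L, x ≠ 0 → y ≠ 0 → v (x * y) = v x + v y)
    (x : L) (hx : x ≠ 0) : v (-x) = v x := by
  have h1 : v (-1 : L) = 0 := by
    have h2 := hv_mul (-1) (-1) (by norm_num) (by norm_num)
    rw [neg_mul_neg, one_mul] at h2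
    have h3 := v_one v hv_mul
    omega
  have := hv_mul (-1) x (by norm_num) hx
  rw [neg_one_mul] at this; omega

private lemma v_inv (hv_mul : ∀ x y : L, x ≠ 0 → y ≠ 0 → v (x * y) = v x + v y)
    (x : L) (hx : x ≠ 0) : v x⁻¹ = -v x := by
  have := hv_mul x x⁻¹ hx (inv_ne_zero hx)
  rw [mul_inv_cancel₀ hx, v_one v hv_mul] at this; omega

/-- The predicate "`x` lies in the maximal ideal `t·𝒪`". -/
private def Pt (x : L) : Prop := x = 0 ∨ 1 ≤ v x

private lemma Pt_zero : Pt v (0 : L) := Or.inl rfl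

private lemma Pt_add (hv_mul : ∀ x y : L, x ≠ 0 → y ≠ 0 → v (x * y) = v x + v y)
    (hv_add : ∀ x y : L, x ≠ 0 → y ≠ 0 → x + y ≠ 0 → min (v x) (v y) ≤ v (x + y))
    {x y : L} (hx : Pt v x) (hy : Pt v y) : Pt v (x + y) := by
  by_cases hx0 : x = 0
  · rw [hx0, zero_add]; exact hy
  by_cases hy0 : y = 0
  · rw [hy0, add_zero]; exact hx
  rcases hx with rfl | hx
  · exact absurd rfl hx0
  rcases hy with rfl | hy
  · exact absurd rfl hy0
  by_cases hxy : x + y = 0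
  · exact Or.inl hxy
  · exact Or.inr (le_trans (le_min hx hy) (hv_add x y hx0 hy0 hxy))

private lemma Pt_neg (hv_mul : ∀ x y : L, x ≠ 0 → y ≠ 0 → v (x * y) = v x + v y)
    {x : L} (hx : Pt v x) : Pt v (-x) := by
  by_cases hx0 : x = 0
  · rw [hx0, neg_zero]; exact Pt_zero v
  rcases hx with rfl | hx
  · exact absurd rfl hx0
  · exact Or.inr (by rw [v_neg v hv_mul x hx0]; exact hx)

private lemma Pt_of_neg (hv_mul : ∀ x y : L, x ≠ 0 → y ≠ 0 → v (x * y) = v x + v y)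
    {x : L} (hx : Pt v (-x)) : Pt v x := by
  have := Pt_neg v hv_mul hx
  rwa [neg_neg] at this

private lemma Pt_mul_left (O : Subring L) (hO : ∀ x : L, x ∈ O ↔ x = 0 ∨ 0 ≤ v x) (hv_mul : ∀ x y : L, x ≠ 0 → y ≠ 0 → v (x * y) = v x + v y)
    {a x : L} (ha : a ∈ O) (hx : Pt v x) : Pt v (a * x) := by
  by_cases ha0 : a = 0
  · rw [ha0, zero_mul]; exact Pt_zero v
  by_cases hx0 : x = 0
  · rw [hx0, mul_zero]; exact Pt_zero v
  rcases hx with rfl | hx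
  · exact absurd rfl hx0
  have hva : 0 ≤ v a := ((hO a).1 ha).resolve_left ha0
  exact Or.inr (by rw [hv_mul a x ha0 hx0]; omega)

private lemma Pt_mul_right (O : Subring L) (hO : ∀ x : L, x ∈ O ↔ x = 0 ∨ 0 ≤ v x) (hv_mul : ∀ x y : L, x ≠ 0 → y ≠ 0 → v (x * y) = v x + v y)
    {a x : L} (hx : Pt v x) (ha : a ∈ O) : Pt v (x * a) := by
  rw [mul_comm]; exact Pt_mul_left v O hO hv_mul ha hx

private lemma Pt_sub (hv_mul : ∀ x y : L, x ≠ 0 → y ≠ 0 → v (x * y) = v x + v y)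
    (hv_add : ∀ x y : L, x ≠ 0 → y ≠ 0 → x + y ≠ 0 → min (v x) (v y) ≤ v (x + y))
    {x y : L} (hx : Pt v x) (hy : Pt v y) : Pt v (x - y) := by
  rw [sub_eq_add_neg]
  exact Pt_add v hv_mul hv_add hx (Pt_neg v hv_mul hy)

private lemma Pt_sum (hv_mul : ∀ x y : L, x ≠ 0 → y ≠ 0 → v (x * y) = v x + v y)
    (hv_add : ∀ x y : L, x ≠ 0 → y ≠ 0 → x + y ≠ 0 → min (v x) (v y) ≤ v (x + y))
    {ι : Type*} [Fintype ι] (f : ι → L) (hf : ∀ i, Pt v (f i)) :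
    Pt v (∑ i, f i) :=
  Finset.sum_induction f (Pt v) (fun _ _ ha hb => Pt_add v hv_mul hv_add ha hb)
    (Pt_zero v) (fun i _ => hf i)

private lemma Pt_one_false (hv_mul : ∀ x y : L, x ≠ 0 → y ≠ 0 → v (x * y) = v x + v y) :
    ¬ Pt v (1 : L) := by
  intro hh
  rcases hh with h0 | h0
  · exact one_ne_zero h0
  · rw [v_one v hv_mul] at h0; omega

private lemma isUnit_of_v (O : Subring L) (hO : ∀ x : L, x ∈ O ↔ x = 0 ∨ 0 ≤ v x) (hv_mul : ∀ x y : L, x ≠ 0 → y ≠ 0 → v (x * y) = v x + v y)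
    (x : O) (hx0 : O.subtype x ≠ 0) (hvx : v (O.subtype x) = 0) : IsUnit x := by
  have hinv : (O.subtype x)⁻¹ ∈ O :=
    (hO _).2 (Or.inr (by rw [v_inv v hv_mul _ hx0, hvx]; omega))
  exact IsUnit.of_mul_eq_one ⟨_, hinv⟩ (Subtype.ext (mul_inv_cancel₀ hx0))

end Val

/-! ### The explicit factorization data -/

section Core

variable {L : Type*} [Field L]

/-- The diagonal over the sum index type. -/
private def dSf (t : L) (n m : ℕ) : Fin n ⊕ Fin m → L :=
  Sum.elim (fun i => if (i : ℕ) = 0 then t ^ 2 else 1) (fun _ => 1)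

/-- The special column vector `w` with `g · w = t² e_last`. -/
private def wfun (t : L) {n m : ℕ} (hn : 1 ≤ n) (hm : 1 ≤ m)
    (h : Matrix (Fin n) (Fin m) L) : Fin n ⊕ Fin m → L :=
  Sum.elim
    (fun i => if (i : ℕ) = 0 then -(h ⟨n - 1, Nat.sub_lt hn one_pos⟩ ⟨0, hm⟩)
      else -(t * h ⟨(i : ℕ) - 1, lt_of_le_of_lt (Nat.sub_le _ _) i.isLt⟩ ⟨0, hm⟩))
    (fun j => if (j : ℕ) = 0 then t else 0)

/-- `W`: the identity with first column replaced by `w`. -/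
private def Wmat (t : L) {n m : ℕ} (hn : 1 ≤ n) (hm : 1 ≤ m)
    (h : Matrix (Fin n) (Fin m) L) : Matrix (Fin n ⊕ Fin m) (Fin n ⊕ Fin m) L :=
  fun a b => if b = Sum.inl (⟨0, hn⟩ : Fin n) then wfun t hn hm h a
    else if a = b then 1 else 0

/-- `U'`: the matrix `g` with first column replaced by `e_last`. -/
private def Umat (t : L) {n m : ℕ} (hn : 1 ≤ n) (hm : 1 ≤ m)
    (h : Matrix (Fin n) (Fin m) L) : Matrix (Fin n ⊕ Fin m) (Fin n ⊕ Fin m) L :=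
  fun a b => if b = Sum.inl (⟨0, hn⟩ : Fin n) then
      (if a = Sum.inr (⟨m - 1, Nat.sub_lt hm one_pos⟩ : Fin m) then 1 else 0)
    else fromBlocks (tau t n) h 0 (tau t m) a b

private lemma key_col (t : L) {n m : ℕ} (hn : 1 ≤ n) (hm : 1 ≤ m)
    (h : Matrix (Fin n) (Fin m) L) (a : Fin n ⊕ Fin m) :
    (∑ c : Fin n ⊕ Fin m, fromBlocks (tau t n) h 0 (tau t m) a c * wfun t hn hm h c) =
      if a = Sum.inr (⟨m - 1, Nat.sub_lt hm one_pos⟩ : Fin m) then t ^ 2 else 0 := by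
  rw [Fintype.sum_sum_type]
  rcases a with i | j
  · rw [if_neg (by simp)]
    have hS2 : (∑ x : Fin m, fromBlocks (tau t n) h 0 (tau t m) (Sum.inl i) (Sum.inr x) *
        wfun t hn hm h (Sum.inr x)) = h i ⟨0, hm⟩ * t := by
      rw [Finset.sum_eq_single (⟨0, hm⟩ : Fin m)]
      · rw [fromBlocks_apply₁₂]
        simp [wfun]
      · intro b _ hb
        have hw : wfun t hn hm h (Sum.inr b) = 0 := by
          simp only [wfun, Sum.elim_inr]
          rw [if_neg (fun hh => hb (Fin.ext hh))]
        rw [hw, mul_zero]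
      · simp
    have hS1 : (∑ x : Fin n, fromBlocks (tau t n) h 0 (tau t m) (Sum.inl i) (Sum.inl x) *
        wfun t hn hm h (Sum.inl x)) = -(t * h i ⟨0, hm⟩) := by
      by_cases hi : (i : ℕ) = n - 1
      · rw [Finset.sum_eq_single (⟨0, hn⟩ : Fin n)]
        · rw [fromBlocks_apply₁₁, tau_apply]
          have hc1 : ¬((i : ℕ) + 1 = ((⟨0, hn⟩ : Fin n) : ℕ)) := by
            show ¬((i : ℕ) + 1 = 0); omega
          rw [if_neg hc1, if_pos ⟨hi, rfl⟩]
          have hw0 : wfun t hn hm h (Sum.inl (⟨0, hn⟩ : Fin n)) =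
              -(h ⟨n - 1, Nat.sub_lt hn one_pos⟩ ⟨0, hm⟩) := by
            simp [wfun]
          rw [hw0]
          have hieq : i = (⟨n - 1, Nat.sub_lt hn one_pos⟩ : Fin n) := Fin.ext hi
          rw [hieq]; ring
        · intro b _ hb
          rw [fromBlocks_apply₁₁, tau_apply]
          have hc1 : ¬((i : ℕ) + 1 = (b : ℕ)) := by have := b.isLt; omega
          have hc2 : ¬((i : ℕ) = n - 1 ∧ (b : ℕ) = 0) := fun hh => hb (Fin.ext hh.2)
          rw [if_neg hc1, if_neg hc2, zero_mul]
        · simp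
      · have hilt : (i : ℕ) + 1 < n := by have := i.isLt; omega
        rw [Finset.sum_eq_single (⟨(i : ℕ) + 1, hilt⟩ : Fin n)]
        · rw [fromBlocks_apply₁₁, tau_apply]
          rw [if_pos rfl, one_mul]
          simp [wfun]
        · intro b _ hb
          rw [fromBlocks_apply₁₁, tau_apply]
          have hc1 : ¬((i : ℕ) + 1 = (b : ℕ)) := fun hh => hb (Fin.ext hh.symm)
          have hc2 : ¬((i : ℕ) = n - 1 ∧ (b : ℕ) = 0) := fun hh => hi hh.1
          rw [if_neg hc1, if_neg hc2, zero_mul]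
        · simp
    rw [hS1, hS2]; ring
  · have hS1 : (∑ x : Fin n, fromBlocks (tau t n) h 0 (tau t m) (Sum.inr j) (Sum.inl x) *
        wfun t hn hm h (Sum.inl x)) = 0 := by
      apply Finset.sum_eq_zero
      intro x _
      rw [fromBlocks_apply₂₁, Matrix.zero_apply, zero_mul]
    have hS2 : (∑ x : Fin m, fromBlocks (tau t n) h 0 (tau t m) (Sum.inr j) (Sum.inr x) *
        wfun t hn hm h (Sum.inr x)) = (if (j : ℕ) = m - 1 then t * t else 0) := by
      rw [Finset.sum_eq_single (⟨0, hm⟩ : Fin m)]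
      · have hw : wfun t hn hm h (Sum.inr (⟨0, hm⟩ : Fin m)) = t := by
          simp [wfun]
        rw [hw, fromBlocks_apply₂₂, tau_apply]
        rw [if_neg (show ¬((j : ℕ) + 1 = ((⟨0, hm⟩ : Fin m) : ℕ)) by
          show ¬((j : ℕ) + 1 = 0); omega)]
        by_cases hj : (j : ℕ) = m - 1
        · rw [if_pos ⟨hj, rfl⟩, if_pos hj]
        · rw [if_neg (fun hh => hj hh.1), if_neg hj, zero_mul]
      · intro b _ hb
        have hw : wfun t hn hm h (Sum.inr b) = 0 := by
          simp only [wfun, Sum.elim_inr]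
          rw [if_neg (fun hh => hb (Fin.ext hh))]
        rw [hw, mul_zero]
      · simp
    rw [hS1, hS2, zero_add]
    by_cases hj : (j : ℕ) = m - 1
    · rw [if_pos hj, if_pos (congrArg Sum.inr (Fin.ext hj))]
      ring
    · rw [if_neg hj, if_neg (fun hh => hj (congrArg Fin.val (Sum.inr.inj hh)))]

private lemma GW_eq (t : L) {n m : ℕ} (hn : 1 ≤ n) (hm : 1 ≤ m)
    (h : Matrix (Fin n) (Fin m) L) :
    fromBlocks (tau t n) h 0 (tau t m) * Wmat t hn hm h =
      Umat t hn hm h * Matrix.diagonal (dSf t n m) := by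
  ext a b
  rw [Matrix.mul_apply, Matrix.mul_diagonal]
  by_cases hb : b = Sum.inl (⟨0, hn⟩ : Fin n)
  · subst hb
    have hW : ∀ c, Wmat t hn hm h c (Sum.inl (⟨0, hn⟩ : Fin n)) = wfun t hn hm h c := by
      intro c
      simp [Wmat]
    rw [Finset.sum_congr rfl fun c _ => by rw [hW c]]
    rw [key_col t hn hm h a]
    have hd : dSf t n m (Sum.inl (⟨0, hn⟩ : Fin n)) = t ^ 2 := by
      simp [dSf]
    have hu : Umat t hn hm h a (Sum.inl (⟨0, hn⟩ : Fin n)) =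
        (if a = Sum.inr (⟨m - 1, Nat.sub_lt hm one_pos⟩ : Fin m) then 1 else 0) := by
      simp [Umat]
    rw [hu, hd]
    split_ifs <;> ring
  · have hW : ∀ c, Wmat t hn hm h c b = if c = b then 1 else 0 := by
      intro c
      simp only [Wmat]
      rw [if_neg hb]
    rw [Finset.sum_congr rfl fun c _ => by rw [hW c]]
    have hsum : (∑ c : Fin n ⊕ Fin m, fromBlocks (tau t n) h 0 (tau t m) a c *
        (if c = b then (1 : L) else 0)) = fromBlocks (tau t n) h 0 (tau t m) a b := by
      rw [Finset.sum_eq_single b]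
      · rw [if_pos rfl, mul_one]
      · intro c _ hc
        rw [if_neg hc, mul_zero]
      · simp
    rw [hsum]
    have hd : dSf t n m b = 1 := by
      rcases b with x | x
      · simp only [dSf, Sum.elim_inl]
        rw [if_neg (fun hh => hb (congrArg Sum.inl (Fin.ext hh)))]
      · rfl
    simp only [Umat]
    rw [if_neg hb, hd, mul_one]

private lemma det_Wmat (t : L) {n m : ℕ} (hn : 1 ≤ n) (hm : 1 ≤ m)
    (h : Matrix (Fin n) (Fin m) L) :
    (Wmat t hn hm h).det = -(h ⟨n - 1, Nat.sub_lt hn one_pos⟩ ⟨0, hm⟩) := by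
  have hupd : Wmat t hn hm h =
      (1 : Matrix (Fin n ⊕ Fin m) (Fin n ⊕ Fin m) L).updateCol
        (Sum.inl (⟨0, hn⟩ : Fin n)) (wfun t hn hm h) := by
    ext a b
    rw [Matrix.updateCol_apply, Matrix.one_apply]
    simp only [Wmat]
  rw [hupd, ← Matrix.cramer_apply, Matrix.cramer_one]
  show wfun t hn hm h (Sum.inl (⟨0, hn⟩ : Fin n)) = _
  simp [wfun]

private lemma det_dSf (t : L) {n m : ℕ} (hn : 1 ≤ n) (hm : 1 ≤ m) :
    (Matrix.diagonal (dSf t n m) : Matrix (Fin n ⊕ Fin m) (Fin n ⊕ Fin m) L).det = t ^ 2 := by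
  rw [Matrix.det_diagonal, Fintype.prod_sum_type]
  have h2 : (∏ j : Fin m, dSf t n m (Sum.inr j)) = 1 :=
    Finset.prod_eq_one fun j _ => rfl
  have h1 : (∏ i : Fin n, dSf t n m (Sum.inl i)) = t ^ 2 := by
    rw [Finset.prod_eq_single (⟨0, hn⟩ : Fin n)]
    · simp [dSf]
    · intro b _ hb
      simp only [dSf, Sum.elim_inl]
      rw [if_neg (fun hh => hb (Fin.ext hh))]
    · simp
  rw [h1, h2, mul_one]

private lemma det_Umat (t : L) (ht0 : t ≠ 0) {n m : ℕ} (hn : 1 ≤ n) (hm : 1 ≤ m)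
    (h : Matrix (Fin n) (Fin m) L) :
    (Umat t hn hm h).det =
      (-1) ^ (n - 1) * (-1) ^ (m - 1) * -(h ⟨n - 1, Nat.sub_lt hn one_pos⟩ ⟨0, hm⟩) := by
  have h1 := congrArg Matrix.det (GW_eq t hn hm h)
  rw [Matrix.det_mul, Matrix.det_mul, det_Wmat t hn hm h, det_dSf t hn hm,
    Matrix.det_fromBlocks_zero₂₁, det_tau t n hn, det_tau t m hm] at h1
  apply mul_right_cancel₀ (pow_ne_zero 2 ht0)
  rw [← h1]; ring

/-! ### The two test row vectors for the forward direction -/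

private def y1f (n m : ℕ) : Fin n ⊕ Fin m → L :=
  Sum.elim (fun _ => 0) (fun j => if (j : ℕ) = m - 1 then 1 else 0)

private def y2f {n m : ℕ} (hn : 1 ≤ n) (h : Matrix (Fin n) (Fin m) L) :
    Fin n ⊕ Fin m → L :=
  Sum.elim (fun i => if (i : ℕ) = n - 1 then 1 else 0)
    (fun j => if hj : (j : ℕ) = m - 1 then 0
      else -(h ⟨n - 1, Nat.sub_lt hn one_pos⟩ ⟨(j : ℕ) + 1, by have := j.isLt; omega⟩))

private lemma y1_vecMul (t : L) {n m : ℕ} (hn : 1 ≤ n) (hm : 1 ≤ m)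
    (h : Matrix (Fin n) (Fin m) L) (b : Fin n ⊕ Fin m) :
    (y1f (L := L) n m ᵥ* fromBlocks (tau t n) h 0 (tau t m)) b =
      if b = Sum.inr (⟨0, hm⟩ : Fin m) then t else 0 := by
  show (∑ a, y1f (L := L) n m a * fromBlocks (tau t n) h 0 (tau t m) a b) = _
  rw [Fintype.sum_sum_type]
  have hS1 : (∑ x : Fin n, y1f (L := L) n m (Sum.inl x) *
      fromBlocks (tau t n) h 0 (tau t m) (Sum.inl x) b) = 0 :=
    Finset.sum_eq_zero fun x _ => by
      show (0 : L) * _ = 0; rw [zero_mul]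
  have hS2 : (∑ x : Fin m, y1f (L := L) n m (Sum.inr x) *
      fromBlocks (tau t n) h 0 (tau t m) (Sum.inr x) b) =
      fromBlocks (tau t n) h 0 (tau t m) (Sum.inr (⟨m - 1, Nat.sub_lt hm one_pos⟩ : Fin m)) b := by
    rw [Finset.sum_eq_single (⟨m - 1, Nat.sub_lt hm one_pos⟩ : Fin m)]
    · have hy : y1f (L := L) n m (Sum.inr (⟨m - 1, Nat.sub_lt hm one_pos⟩ : Fin m)) = 1 := by
        simp [y1f]
      rw [hy, one_mul]
    · intro x _ hx
      have hy : y1f (L := L) n m (Sum.inr x) = 0 := by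
        simp only [y1f, Sum.elim_inr]
        rw [if_neg (fun hh => hx (Fin.ext hh))]
      rw [hy, zero_mul]
    · simp
  rw [hS1, hS2, zero_add]
  rcases b with x | x
  · rw [fromBlocks_apply₂₁, Matrix.zero_apply, if_neg (by simp)]
  · rw [fromBlocks_apply₂₂, tau_apply]
    have hc1 : ¬(((⟨m - 1, Nat.sub_lt hm one_pos⟩ : Fin m) : ℕ) + 1 = (x : ℕ)) := by
      show ¬(m - 1 + 1 = (x : ℕ)); have := x.isLt; omega
    rw [if_neg hc1]
    by_cases hx : (x : ℕ) = 0
    · rw [if_pos ⟨rfl, hx⟩, if_pos (congrArg Sum.inr (Fin.ext hx))]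
    · rw [if_neg (fun hh => hx hh.2),
        if_neg (fun hh => hx (congrArg Fin.val (Sum.inr.inj hh)))]

private lemma y2_vecMul (t : L) {n m : ℕ} (hn : 1 ≤ n) (hm : 1 ≤ m)
    (h : Matrix (Fin n) (Fin m) L) (b : Fin n ⊕ Fin m) :
    (y2f hn h ᵥ* fromBlocks (tau t n) h 0 (tau t m)) b =
      if b = Sum.inl (⟨0, hn⟩ : Fin n) then t
      else if b = Sum.inr (⟨0, hm⟩ : Fin m) then
        h ⟨n - 1, Nat.sub_lt hn one_pos⟩ ⟨0, hm⟩
      else 0 := by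
  show (∑ a, y2f hn h a * fromBlocks (tau t n) h 0 (tau t m) a b) = _
  rw [Fintype.sum_sum_type]
  have hS1 : (∑ x : Fin n, y2f hn h (Sum.inl x) *
      fromBlocks (tau t n) h 0 (tau t m) (Sum.inl x) b) =
      fromBlocks (tau t n) h 0 (tau t m) (Sum.inl (⟨n - 1, Nat.sub_lt hn one_pos⟩ : Fin n)) b := by
    rw [Finset.sum_eq_single (⟨n - 1, Nat.sub_lt hn one_pos⟩ : Fin n)]
    · have hy : y2f hn h (Sum.inl (⟨n - 1, Nat.sub_lt hn one_pos⟩ : Fin n)) = 1 := by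
        simp [y2f]
      rw [hy, one_mul]
    · intro x _ hx
      have hy : y2f hn h (Sum.inl x) = 0 := by
        simp only [y2f, Sum.elim_inl]
        rw [if_neg (fun hh => hx (Fin.ext hh))]
      rw [hy, zero_mul]
    · simp
  rcases b with x' | x'
  · have hS2 : (∑ x : Fin m, y2f hn h (Sum.inr x) *
        fromBlocks (tau t n) h 0 (tau t m) (Sum.inr x) (Sum.inl x')) = 0 :=
      Finset.sum_eq_zero fun x _ => by
        rw [fromBlocks_apply₂₁, Matrix.zero_apply, mul_zero]
    rw [hS1, hS2, add_zero, fromBlocks_apply₁₁, tau_apply]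
    have hc1 : ¬(((⟨n - 1, Nat.sub_lt hn one_pos⟩ : Fin n) : ℕ) + 1 = (x' : ℕ)) := by
      show ¬(n - 1 + 1 = (x' : ℕ)); have := x'.isLt; omega
    rw [if_neg hc1, if_neg (show ¬(Sum.inl x' = Sum.inr (⟨0, hm⟩ : Fin m)) by simp)]
    by_cases hx' : (x' : ℕ) = 0
    · rw [if_pos ⟨rfl, hx'⟩, if_pos (congrArg Sum.inl (Fin.ext hx'))]
    · rw [if_neg (fun hh => hx' hh.2),
        if_neg (fun hh => hx' (congrArg Fin.val (Sum.inl.inj hh)))]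
  · have hS2 : (∑ x : Fin m, y2f hn h (Sum.inr x) *
        fromBlocks (tau t n) h 0 (tau t m) (Sum.inr x) (Sum.inr x')) =
        if (x' : ℕ) = 0 then 0 else -(h ⟨n - 1, Nat.sub_lt hn one_pos⟩ x') := by
      by_cases hx' : (x' : ℕ) = 0
      · rw [if_pos hx']
        apply Finset.sum_eq_zero
        intro x _
        by_cases hx : (x : ℕ) = m - 1
        · have hy : y2f hn h (Sum.inr x) = 0 := by
            simp only [y2f, Sum.elim_inr]
            rw [dif_pos hx]
          rw [hy, zero_mul]
        · rw [fromBlocks_apply₂₂, tau_apply]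
          rw [if_neg (by omega), if_neg (fun hh => hx hh.1), mul_zero]
      · rw [if_neg hx']
        have hlt : (x' : ℕ) - 1 < m := by have := x'.isLt; omega
        rw [Finset.sum_eq_single (⟨(x' : ℕ) - 1, hlt⟩ : Fin m)]
        · have hne' : ¬(((⟨(x' : ℕ) - 1, hlt⟩ : Fin m) : ℕ) = m - 1) := by
            show ¬((x' : ℕ) - 1 = m - 1); have := x'.isLt; omega
          rw [fromBlocks_apply₂₂, tau_apply,
            if_pos (show ((⟨(x' : ℕ) - 1, hlt⟩ : Fin m) : ℕ) + 1 = (x' : ℕ) by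
              show (x' : ℕ) - 1 + 1 = (x' : ℕ); omega), mul_one]
          simp only [y2f, Sum.elim_inr]
          rw [dif_neg hne']
          exact congrArg (fun z : Fin m => -(h ⟨n - 1, Nat.sub_lt hn one_pos⟩ z))
            (Fin.ext (show (x' : ℕ) - 1 + 1 = (x' : ℕ) by omega))
        · intro x _ hx
          by_cases hxm : (x : ℕ) = m - 1
          · have hy : y2f hn h (Sum.inr x) = 0 := by
              simp only [y2f, Sum.elim_inr]
              rw [dif_pos hxm]
            rw [hy, zero_mul]
          · rw [fromBlocks_apply₂₂, tau_apply]
            rw [if_neg (fun hh => hx (Fin.ext (show (x : ℕ) = (x' : ℕ) - 1 by omega))),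
              if_neg (fun hh => hxm hh.1), mul_zero]
        · simp
    rw [hS1, hS2, fromBlocks_apply₁₂,
      if_neg (show ¬(Sum.inr x' = Sum.inl (⟨0, hn⟩ : Fin n)) by simp)]
    by_cases hx' : (x' : ℕ) = 0
    · rw [if_pos hx', if_pos (congrArg Sum.inr (Fin.ext hx')), add_zero]
      exact congrArg (fun z : Fin m => h ⟨n - 1, Nat.sub_lt hn one_pos⟩ z) (Fin.ext hx')
    · rw [if_neg hx', if_neg (fun hh => hx' (congrArg Fin.val (Sum.inr.inj hh)))]
      ring

end Core

/-! ### The two core implications over the sum index type -/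

private lemma forward_core {L : Type*} [Field L] (v : L → ℤ) (t : L)
    (hv_mul : ∀ x y : L, x ≠ 0 → y ≠ 0 → v (x * y) = v x + v y)
    (hv_add : ∀ x y : L, x ≠ 0 → y ≠ 0 → x + y ≠ 0 → min (v x) (v y) ≤ v (x + y))
    (ht0 : t ≠ 0) (ht1 : v t = 1)
    (O : Subring L) (hO : ∀ x : L, x ∈ O ↔ x = 0 ∨ 0 ≤ v x)
    {n m : ℕ} (hn : 1 ≤ n) (hm : 1 ≤ m)
    (h : Matrix (Fin n) (Fin m) L)
    (U V : Matrix (Fin n ⊕ Fin m) (Fin n ⊕ Fin m) O)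
    (hU : IsUnit U.det) (hV : IsUnit V.det)
    (heq : fromBlocks (tau t n) h 0 (tau t m) =
      U.map O.subtype * Matrix.diagonal (dSf t n m) * V.map O.subtype) :
    h ⟨n - 1, Nat.sub_lt hn one_pos⟩ ⟨0, hm⟩ ≠ 0 ∧
      v (h ⟨n - 1, Nat.sub_lt hn one_pos⟩ ⟨0, hm⟩) = 0 ∧ ∀ i j, h i j ∈ O := by
  have htO : t ∈ O := (hO t).2 (Or.inr (by omega))
  have hdSO : ∀ c, dSf t n m c ∈ O := by
    rintro (i | j)
    · simp only [dSf, Sum.elim_inl]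
      split_ifs
      · exact pow_mem htO 2
      · exact O.one_mem
    · exact O.one_mem
  have hGO : ∀ a b, fromBlocks (tau t n) h 0 (tau t m) a b ∈ O := by
    intro a b
    rw [heq, Matrix.mul_apply]
    refine O.sum_mem fun c _ => ?_
    rw [Matrix.mul_diagonal]
    exact O.mul_mem (O.mul_mem (SetLike.coe_mem _) (hdSO c)) (SetLike.coe_mem _)
  have hmemh : ∀ i j, h i j ∈ O := by
    intro i j
    have := hGO (Sum.inl i) (Sum.inr j)
    rwa [fromBlocks_apply₁₂] at this
  have key : ¬ Pt v (h ⟨n - 1, Nat.sub_lt hn one_pos⟩ ⟨0, hm⟩) := by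
    intro hbad
    haveI iU : Invertible U := U.invertibleOfIsUnitDet hU
    haveI iV : Invertible V := V.invertibleOfIsUnitDet hV
    have hUI : U.map O.subtype * (⅟U).map O.subtype = 1 := by
      rw [← Matrix.map_mul, mul_invOf_self, Matrix.map_one _ (map_zero _) (map_one _)]
    have hVI : V.map O.subtype * (⅟V).map O.subtype = 1 := by
      rw [← Matrix.map_mul, mul_invOf_self, Matrix.map_one _ (map_zero _) (map_one _)]
    -- step 3: rows mapped into t·O by G stay there after removing V and the diagonal
    have step3 : ∀ y : (Fin n ⊕ Fin m) → L,
        (∀ b, Pt v ((y ᵥ* fromBlocks (tau t n) h 0 (tau t m)) b)) →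
        ∀ b, b ≠ Sum.inl (⟨0, hn⟩ : Fin n) → Pt v ((y ᵥ* U.map O.subtype) b) := by
      intro y hy b hb
      have h1 : (y ᵥ* U.map O.subtype) ᵥ* Matrix.diagonal (dSf t n m) =
          (y ᵥ* fromBlocks (tau t n) h 0 (tau t m)) ᵥ* (⅟V).map O.subtype := by
        rw [heq, Matrix.vecMul_vecMul, Matrix.vecMul_vecMul,
          mul_assoc (U.map O.subtype * Matrix.diagonal (dSf t n m)), hVI, mul_one]
      have h2 : ∀ b', Pt v (((y ᵥ* U.map O.subtype) ᵥ* Matrix.diagonal (dSf t n m)) b') := by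
        intro b'
        rw [h1]
        show Pt v (∑ a, (y ᵥ* fromBlocks (tau t n) h 0 (tau t m)) a * ((⅟V).map O.subtype) a b')
        exact Pt_sum v hv_mul hv_add _ fun a =>
          Pt_mul_right v O hO hv_mul (hy a) (SetLike.coe_mem _)
      have h3 := h2 b
      rw [Matrix.vecMul_diagonal] at h3
      have hdb : dSf t n m b = 1 := by
        rcases b with i | j
        · simp only [dSf, Sum.elim_inl]
          rw [if_neg (fun hh => hb (congrArg Sum.inl (Fin.ext hh)))]
        · rfl
      rwa [hdb, mul_one] at h3
    have memstep : ∀ (y : (Fin n ⊕ Fin m) → L) (M : Matrix (Fin n ⊕ Fin m) (Fin n ⊕ Fin m) O),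
        (∀ a, y a ∈ O) → ∀ b, (y ᵥ* M.map O.subtype) b ∈ O := by
      intro y M hy b
      show (∑ a, y a * (M.map O.subtype) a b) ∈ O
      exact O.sum_mem fun a _ => O.mul_mem (hy a) (SetLike.coe_mem _)
    -- the two rows
    have hy1mem : ∀ a, y1f (L := L) n m a ∈ O := by
      rintro (i | j)
      · exact O.zero_mem
      · simp only [y1f, Sum.elim_inr]
        split_ifs
        · exact O.one_mem
        · exact O.zero_mem
    have hy2mem : ∀ a, y2f hn h a ∈ O := by
      rintro (i | j)
      · simp only [y2f, Sum.elim_inl]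
        split_ifs
        · exact O.one_mem
        · exact O.zero_mem
      · simp only [y2f, Sum.elim_inr]
        split_ifs
        · exact O.zero_mem
        · exact O.neg_mem (hmemh _ _)
    have hy1Pt : ∀ b, Pt v ((y1f (L := L) n m ᵥ* fromBlocks (tau t n) h 0 (tau t m)) b) := by
      intro b
      rw [y1_vecMul t hn hm h b]
      split_ifs
      · exact Or.inr (by omega)
      · exact Pt_zero v
    have hy2Pt : ∀ b, Pt v ((y2f hn h ᵥ* fromBlocks (tau t n) h 0 (tau t m)) b) := by
      intro b
      rw [y2_vecMul t hn hm h b]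
      split_ifs
      · exact Or.inr (by omega)
      · exact hbad
      · exact Pt_zero v
    have hz1 := step3 _ hy1Pt
    have hz2 := step3 _ hy2Pt
    set z1 : (Fin n ⊕ Fin m) → L := y1f (L := L) n m ᵥ* U.map O.subtype with hz1def
    set z2 : (Fin n ⊕ Fin m) → L := y2f hn h ᵥ* U.map O.subtype with hz2def
    have hc1O : z1 (Sum.inl (⟨0, hn⟩ : Fin n)) ∈ O := memstep _ U hy1mem _
    have hc2O : z2 (Sum.inl (⟨0, hn⟩ : Fin n)) ∈ O := memstep _ U hy2mem _
    set c1 : L := z1 (Sum.inl (⟨0, hn⟩ : Fin n)) with hc1def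
    set c2 : L := z2 (Sum.inl (⟨0, hn⟩ : Fin n)) with hc2def
    set zz : (Fin n ⊕ Fin m) → L :=
      fun a => c1 * y2f hn h a - c2 * y1f (L := L) n m a with hzzdef
    have hzzmem : ∀ a, zz a ∈ O := by
      intro a
      rw [hzzdef]
      exact O.sub_mem (O.mul_mem hc1O (hy2mem a)) (O.mul_mem hc2O (hy1mem a))
    have hzzU : ∀ b, (zz ᵥ* U.map O.subtype) b = c1 * z2 b - c2 * z1 b := by
      intro b
      have e1 : z1 b = ∑ a, y1f (L := L) n m a * (U.map O.subtype) a b := rfl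
      have e2 : z2 b = ∑ a, y2f hn h a * (U.map O.subtype) a b := rfl
      show (∑ a, (c1 * y2f hn h a - c2 * y1f (L := L) n m a) * (U.map O.subtype) a b) = _
      rw [e1, e2, Finset.mul_sum, Finset.mul_sum, ← Finset.sum_sub_distrib]
      exact Finset.sum_congr rfl fun a _ => by ring
    have hPtzzU : ∀ b, Pt v ((zz ᵥ* U.map O.subtype) b) := by
      intro b
      rw [hzzU b]
      by_cases hb : b = Sum.inl (⟨0, hn⟩ : Fin n)
      · subst hb
        rw [← hc1def, ← hc2def]
        exact Or.inl (by ring)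
      · exact Pt_sub v hv_mul hv_add
          (Pt_mul_left v O hO hv_mul hc1O (hz2 b hb))
          (Pt_mul_left v O hO hv_mul hc2O (hz1 b hb))
    have hPtzz : ∀ a, Pt v (zz a) := by
      intro a
      have hid : zz = (zz ᵥ* U.map O.subtype) ᵥ* (⅟U).map O.subtype := by
        rw [Matrix.vecMul_vecMul, hUI, Matrix.vecMul_one]
      rw [hid]
      show Pt v (∑ b, (zz ᵥ* U.map O.subtype) b * ((⅟U).map O.subtype) b a)
      exact Pt_sum v hv_mul hv_add _ fun b =>
        Pt_mul_right v O hO hv_mul (hPtzzU b) (SetLike.coe_mem _)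
    have hPtc1 : Pt v c1 := by
      have hval := hPtzz (Sum.inl (⟨n - 1, Nat.sub_lt hn one_pos⟩ : Fin n))
      have hy2v : y2f (m := m) hn h (Sum.inl (⟨n - 1, Nat.sub_lt hn one_pos⟩ : Fin n)) = 1 := by
        simp [y2f]
      have hy1v : y1f (L := L) n m (Sum.inl (⟨n - 1, Nat.sub_lt hn one_pos⟩ : Fin n)) = 0 := rfl
      have : zz (Sum.inl (⟨n - 1, Nat.sub_lt hn one_pos⟩ : Fin n)) = c1 := by
        rw [hzzdef]; dsimp only; rw [hy2v, hy1v]; ring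
      rwa [this] at hval
    have hPtc2 : Pt v c2 := by
      have hval := hPtzz (Sum.inr (⟨m - 1, Nat.sub_lt hm one_pos⟩ : Fin m))
      have hy2v : y2f (m := m) hn h (Sum.inr (⟨m - 1, Nat.sub_lt hm one_pos⟩ : Fin m)) = 0 := by
        simp [y2f]
      have hy1v : y1f (L := L) n m (Sum.inr (⟨m - 1, Nat.sub_lt hm one_pos⟩ : Fin m)) = 1 := by
        simp [y1f]
      have : zz (Sum.inr (⟨m - 1, Nat.sub_lt hm one_pos⟩ : Fin m)) = -c2 := by
        rw [hzzdef]; dsimp only; rw [hy2v, hy1v]; ring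
      rw [this] at hval
      exact Pt_of_neg v hv_mul hval
    have hz1all : ∀ b, Pt v (z1 b) := by
      intro b
      by_cases hb : b = Sum.inl (⟨0, hn⟩ : Fin n)
      · rw [hb]; exact hPtc1
      · exact hz1 b hb
    have hy1back : y1f (L := L) n m = z1 ᵥ* (⅟U).map O.subtype := by
      rw [hz1def, Matrix.vecMul_vecMul, hUI, Matrix.vecMul_one]
    have hPty1 : Pt v (y1f (L := L) n m (Sum.inr (⟨m - 1, Nat.sub_lt hm one_pos⟩ : Fin m))) := by
      rw [hy1back]
      show Pt v (∑ b, z1 b * ((⅟U).map O.subtype) b _)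
      exact Pt_sum v hv_mul hv_add _ fun b =>
        Pt_mul_right v O hO hv_mul (hz1all b) (SetLike.coe_mem _)
    have hy1v : y1f (L := L) n m (Sum.inr (⟨m - 1, Nat.sub_lt hm one_pos⟩ : Fin m)) = 1 := by
      simp [y1f]
    rw [hy1v] at hPty1
    exact Pt_one_false v hv_mul hPty1
  have hmem0 := hmemh ⟨n - 1, Nat.sub_lt hn one_pos⟩ ⟨0, hm⟩
  rw [Pt] at key
  push_neg at key
  obtain ⟨hne0, hlt⟩ := key
  refine ⟨hne0, ?_, hmemh⟩
  rcases (hO _).1 hmem0 with h0 | h0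
  · exact absurd h0 hne0
  · omega

private lemma backward_core {L : Type*} [Field L] (v : L → ℤ) (t : L)
    (hv_mul : ∀ x y : L, x ≠ 0 → y ≠ 0 → v (x * y) = v x + v y)
    (ht0 : t ≠ 0) (ht1 : v t = 1)
    (O : Subring L) (hO : ∀ x : L, x ∈ O ↔ x = 0 ∨ 0 ≤ v x)
    {n m : ℕ} (hn : 1 ≤ n) (hm : 1 ≤ m)
    (h : Matrix (Fin n) (Fin m) L)
    (hne : h ⟨n - 1, Nat.sub_lt hn one_pos⟩ ⟨0, hm⟩ ≠ 0)
    (hv0 : v (h ⟨n - 1, Nat.sub_lt hn one_pos⟩ ⟨0, hm⟩) = 0)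
    (hmem : ∀ i j, h i j ∈ O) :
    ∃ U V : Matrix (Fin n ⊕ Fin m) (Fin n ⊕ Fin m) O, IsUnit U.det ∧ IsUnit V.det ∧
      fromBlocks (tau t n) h 0 (tau t m) =
        U.map O.subtype * Matrix.diagonal (dSf t n m) * V.map O.subtype := by
  have htO : t ∈ O := (hO t).2 (Or.inr (by omega))
  have hαO : h ⟨n - 1, Nat.sub_lt hn one_pos⟩ ⟨0, hm⟩ ∈ O := hmem _ _
  -- memberships
  have hwO : ∀ c, wfun t hn hm h c ∈ O := by
    rintro (i | j)
    · simp only [wfun, Sum.elim_inl]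
      split_ifs
      · exact O.neg_mem hαO
      · exact O.neg_mem (O.mul_mem htO (hmem _ _))
    · simp only [wfun, Sum.elim_inr]
      split_ifs
      · exact htO
      · exact O.zero_mem
  have hWO : ∀ a b, Wmat t hn hm h a b ∈ O := by
    intro a b
    simp only [Wmat]
    split_ifs
    · exact hwO a
    · exact O.one_mem
    · exact O.zero_mem
  have hGOent : ∀ a b, fromBlocks (tau t n) h 0 (tau t m) a b ∈ O := by
    rintro (i | i) (j | j)
    · rw [fromBlocks_apply₁₁, tau_apply]
      split_ifs
      · exact O.one_mem
      · exact htO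
      · exact O.zero_mem
    · rw [fromBlocks_apply₁₂]; exact hmem _ _
    · rw [fromBlocks_apply₂₁, Matrix.zero_apply]; exact O.zero_mem
    · rw [fromBlocks_apply₂₂, tau_apply]
      split_ifs
      · exact O.one_mem
      · exact htO
      · exact O.zero_mem
  have hUO : ∀ a b, Umat t hn hm h a b ∈ O := by
    intro a b
    simp only [Umat]
    split_ifs
    · exact O.one_mem
    · exact O.zero_mem
    · exact hGOent a b
  -- the O-valued matrices
  set WO : Matrix (Fin n ⊕ Fin m) (Fin n ⊕ Fin m) O :=
    fun a b => ⟨Wmat t hn hm h a b, hWO a b⟩ with hWOdef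
  set UO : Matrix (Fin n ⊕ Fin m) (Fin n ⊕ Fin m) O :=
    fun a b => ⟨Umat t hn hm h a b, hUO a b⟩ with hUOdef
  have hWmap : WO.map O.subtype = Wmat t hn hm h := by ext a b; rfl
  have hUmap : UO.map O.subtype = Umat t hn hm h := by ext a b; rfl
  -- determinant of W
  have hdetW : O.subtype WO.det = -(h ⟨n - 1, Nat.sub_lt hn one_pos⟩ ⟨0, hm⟩) := by
    have h1 := RingHom.map_det O.subtype WO
    rw [RingHom.mapMatrix_apply, hWmap, det_Wmat t hn hm h] at h1
    exact h1
  have hunitW : IsUnit WO.det := by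
    apply isUnit_of_v v O hO hv_mul
    · rw [hdetW]; exact neg_ne_zero.2 hne
    · rw [hdetW, v_neg v hv_mul _ hne, hv0]
  -- determinant of U
  have hdetU : O.subtype UO.det =
      (-1) ^ (n - 1) * (-1) ^ (m - 1) * -(h ⟨n - 1, Nat.sub_lt hn one_pos⟩ ⟨0, hm⟩) := by
    have h1 := RingHom.map_det O.subtype UO
    rw [RingHom.mapMatrix_apply, hUmap, det_Umat t ht0 hn hm h] at h1
    exact h1
  have hvpm : ∀ (s : ℕ) (x : L), x ≠ 0 → v ((-1) ^ s * x) = v x := by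
    intro s x hx
    rcases neg_one_pow_eq_or L s with hp | hp <;> rw [hp]
    · rw [one_mul]
    · rw [neg_one_mul]; exact v_neg v hv_mul x hx
  have hcne : ((-1 : L) ^ (n - 1) * (-1) ^ (m - 1) *
      -(h ⟨n - 1, Nat.sub_lt hn one_pos⟩ ⟨0, hm⟩)) ≠ 0 := by
    apply mul_ne_zero (mul_ne_zero (pow_ne_zero _ (by norm_num)) (pow_ne_zero _ (by norm_num)))
    exact neg_ne_zero.2 hne
  have hunitU : IsUnit UO.det := by
    apply isUnit_of_v v O hO hv_mul
    · rw [hdetU]; exact hcne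
    · rw [hdetU, mul_assoc, hvpm _ _ (mul_ne_zero (pow_ne_zero _ (by norm_num))
        (neg_ne_zero.2 hne)), hvpm _ _ (neg_ne_zero.2 hne), v_neg v hv_mul _ hne, hv0]
  -- invert W
  haveI : Invertible WO := WO.invertibleOfIsUnitDet hunitW
  have hWV : WO * ⅟WO = 1 := mul_invOf_self WO
  have hVmap : Wmat t hn hm h * (⅟WO).map O.subtype = 1 := by
    rw [← hWmap, ← Matrix.map_mul, hWV, Matrix.map_one _ (map_zero _) (map_one _)]
  have hunitV : IsUnit (⅟WO).det := by
    have h1 := congrArg Matrix.det hWV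
    rw [Matrix.det_mul, Matrix.det_one] at h1
    exact IsUnit.of_mul_eq_one _ (by rw [mul_comm]; exact h1)
  refine ⟨UO, ⅟WO, hunitU, hunitV, ?_⟩
  rw [hUmap]
  calc fromBlocks (tau t n) h 0 (tau t m)
      = fromBlocks (tau t n) h 0 (tau t m) * (Wmat t hn hm h * (⅟WO).map O.subtype) := by
        rw [hVmap, mul_one]
    _ = (fromBlocks (tau t n) h 0 (tau t m) * Wmat t hn hm h) * (⅟WO).map O.subtype := by
        rw [mul_assoc]
    _ = Umat t hn hm h * Matrix.diagonal (dSf t n m) * (⅟WO).map O.subtype := by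
        rw [GW_eq t hn hm h]

/-- For the block matrix `g = [[τ_n, h], [0, τ_m]]`, one has
`g ∈ GL_{n+m}(𝒪_L) · diag(t², 1, …, 1) · GL_{n+m}(𝒪_L)` iff `h_{n,1}` is a unit of `𝒪_L`
(i.e. `v(h_{n,1}) = 0`) and all entries of `h` lie in `𝒪_L`. -/
theorem stmt_13 {L : Type*} [Field L] (v : L → ℤ) (t : L)
    (hv_mul : ∀ x y : L, x ≠ 0 → y ≠ 0 → v (x * y) = v x + v y)
    (hv_add : ∀ x y : L, x ≠ 0 → y ≠ 0 → x + y ≠ 0 → min (v x) (v y) ≤ v (x + y))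
    (hv_surj : ∀ n : ℤ, ∃ x : L, x ≠ 0 ∧ v x = n)
    (ht0 : t ≠ 0) (ht1 : v t = 1)
    (O : Subring L) (hO : ∀ x : L, x ∈ O ↔ x = 0 ∨ 0 ≤ v x)
    (n m : ℕ) (hn : 1 ≤ n) (hm : 1 ≤ m)
    (h : Matrix (Fin n) (Fin m) L) :
    (∃ U V : Matrix (Fin (n + m)) (Fin (n + m)) O, IsUnit U.det ∧ IsUnit V.det ∧
        Matrix.reindex finSumFinEquiv finSumFinEquiv (Matrix.fromBlocks (tau t n) h 0 (tau t m)) =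
          U.map (fun x => (x : L)) *
            Matrix.diagonal (fun i : Fin (n + m) => if (i : ℕ) = 0 then t ^ 2 else 1) *
            V.map (fun x => (x : L)))
      ↔ (h (⟨n - 1, by omega⟩ : Fin n) (⟨0, by omega⟩ : Fin m) ≠ 0 ∧
          v (h (⟨n - 1, by omega⟩ : Fin n) (⟨0, by omega⟩ : Fin m)) = 0 ∧
          ∀ i j, h i j ∈ O) := by
  have hmapeq : ∀ (M : Matrix (Fin (n + m)) (Fin (n + m)) O),
      M.map (fun x : O => (x : L)) = M.map O.subtype := fun M => rfl
  set e : (Fin n ⊕ Fin m) ≃ Fin (n + m) := finSumFinEquiv with hedef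
  have hpoint : ∀ a b : Fin n ⊕ Fin m,
      (Matrix.diagonal (fun i : Fin (n + m) => if (i : ℕ) = 0 then t ^ 2 else 1)) (e a) (e b)
        = Matrix.diagonal (dSf t n m) a b := by
    intro a b
    by_cases hab : a = b
    · subst hab
      rw [Matrix.diagonal_apply_eq, Matrix.diagonal_apply_eq]
      rcases a with i | j
      · have hv : ((e (Sum.inl i)) : ℕ) = (i : ℕ) := by simp [hedef]
        rw [hv]; rfl
      · have hv : ((e (Sum.inr j)) : ℕ) = n + (j : ℕ) := by simp [hedef]
        rw [hv, if_neg (by omega)]; rfl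
    · rw [Matrix.diagonal_apply_ne _ (fun hh => hab (e.injective hh)),
        Matrix.diagonal_apply_ne _ hab]
  have hD2 : (Matrix.diagonal (fun i : Fin (n + m) =>
      if (i : ℕ) = 0 then t ^ 2 else 1)).submatrix ⇑e ⇑e = Matrix.diagonal (dSf t n m) := by
    ext a b
    rw [Matrix.submatrix_apply]
    exact hpoint a b
  have hDre : (Matrix.diagonal (fun i : Fin (n + m) => if (i : ℕ) = 0 then t ^ 2 else 1))
      = Matrix.reindex e e (Matrix.diagonal (dSf t n m)) := by
    ext i j
    rw [Matrix.reindex_apply, Matrix.submatrix_apply]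
    have hpq := hpoint (e.symm i) (e.symm j)
    rw [Equiv.apply_symm_apply, Equiv.apply_symm_apply] at hpq
    exact hpq
  constructor
  · rintro ⟨U, V, hU, hV, heq⟩
    rw [hmapeq U, hmapeq V] at heq
    have h01 : (Matrix.reindex e e (fromBlocks (tau t n) h 0 (tau t m))).submatrix ⇑e ⇑e
        = fromBlocks (tau t n) h 0 (tau t m) := by
      ext a b
      rw [Matrix.submatrix_apply, Matrix.reindex_apply, Matrix.submatrix_apply,
        Equiv.symm_apply_apply, Equiv.symm_apply_apply]
    have h0 : fromBlocks (tau t n) h 0 (tau t m)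
        = (U.map O.subtype *
            Matrix.diagonal (fun i : Fin (n + m) => if (i : ℕ) = 0 then t ^ 2 else 1) *
            V.map O.subtype).submatrix ⇑e ⇑e := by
      rw [← h01, heq]
    rw [← Matrix.submatrix_mul_equiv (U.map O.subtype *
        Matrix.diagonal (fun i : Fin (n + m) => if (i : ℕ) = 0 then t ^ 2 else 1))
        (V.map O.subtype) ⇑e e ⇑e] at h0
    rw [← Matrix.submatrix_mul_equiv (U.map O.subtype)
        (Matrix.diagonal (fun i : Fin (n + m) => if (i : ℕ) = 0 then t ^ 2 else 1))
        ⇑e e ⇑e] at h0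
    rw [hD2] at h0
    have hms : ∀ (M : Matrix (Fin (n + m)) (Fin (n + m)) O),
        (M.map O.subtype).submatrix ⇑e ⇑e = (M.submatrix ⇑e ⇑e).map O.subtype :=
      fun M => rfl
    rw [hms U, hms V] at h0
    have hU' : IsUnit (U.submatrix ⇑e ⇑e).det := by
      rw [Matrix.det_submatrix_equiv_self]; exact hU
    have hV' : IsUnit (V.submatrix ⇑e ⇑e).det := by
      rw [Matrix.det_submatrix_equiv_self]; exact hV
    exact forward_core v t hv_mul hv_add ht0 ht1 O hO hn hm h _ _ hU' hV' h0
  · rintro ⟨hne, hv0, hmem⟩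
    obtain ⟨U0, V0, hU0, hV0, hEq0⟩ :=
      backward_core v t hv_mul ht0 ht1 O hO hn hm h hne hv0 hmem
    refine ⟨Matrix.reindex e e U0, Matrix.reindex e e V0, ?_, ?_, ?_⟩
    · rw [Matrix.det_reindex_self]; exact hU0
    · rw [Matrix.det_reindex_self]; exact hV0
    · rw [hmapeq, hmapeq, hDre]
      have hmap2 : ∀ (M : Matrix (Fin n ⊕ Fin m) (Fin n ⊕ Fin m) O),
          (Matrix.reindex e e M).map O.subtype = Matrix.reindex e e (M.map O.subtype) :=
        fun M => rfl
      rw [hmap2, hmap2]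
      rw [Matrix.reindex_apply, Matrix.reindex_apply, Matrix.reindex_apply,
        Matrix.reindex_apply]
      rw [Matrix.submatrix_mul_equiv (U0.map O.subtype)
        (Matrix.diagonal (dSf t n m)) ⇑e.symm e.symm ⇑e.symm]
      rw [Matrix.submatrix_mul_equiv (U0.map O.subtype * Matrix.diagonal (dSf t n m))
        (V0.map O.subtype) ⇑e.symm e.symm ⇑e.symm]
      rw [hEq0]
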